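/- Let S be a finite simple group, c ∈ ℕ, and m an integer with m > |S|^c. Then the direct product S^m cannot be generated by c elements. -/

import Mathlib

/-- **Proposition (Kassabov–Nikolov).**  For a finite simple group `S`, `c ∈ ℕ` and
`m > |S|^c`, the direct product `S^m` cannot be generated by `c` elements. -/
theorem power_not_generated_by_c_elements
    (S : Type) [Group S] [Finite S] (hS : IsSimpleGroup S)
    (c m : ℕ) (hm : Nat.card S ^ c < m) :
    ∀ g : Fin c → (Fin m → S), Subgroup.closure (Set.range g) ≠ ⊤ := by
  intro g hgen
  -- pigeonhole : two coordinates see the same c-tuple of generator entries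
  have : Fintype S := Fintype.ofFinite S
  have hcard : Fintype.card (Fin c → S) < Fintype.card (Fin m) := by
    simpa [Fintype.card_fun, Nat.card_eq_fintype_card] using hm
  obtain ⟨i, j, hij, hφ⟩ :=
    Fintype.exists_ne_map_eq_of_card_lt (fun i : Fin m => fun k : Fin c => g k i) hcard
  -- the subgroup of tuples agreeing at coordinates i and j
  set H : Subgroup (Fin m → S) :=
    { carrier := {x | x i = x j}
      one_mem' := rfl
      mul_mem' := by
        intro a b ha hb
        simp only [Set.mem_setOf_eq, Pi.mul_apply] at *
        rw [ha, hb]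
      inv_mem' := by
        intro a ha
        simp only [Set.mem_setOf_eq, Pi.inv_apply] at *
        rw [ha] } with hH
  have hle : Subgroup.closure (Set.range g) ≤ H := by
    rw [Subgroup.closure_le]
    rintro _ ⟨k, rfl⟩
    have := congrFun hφ k
    exact this
  rw [hgen] at hle
  obtain ⟨s, hs⟩ := exists_ne (1 : S)
  have hx : (Function.update (1 : Fin m → S) i s) ∈ H := hle (Subgroup.mem_top _)
  have : s = 1 := by
    have h1 : Function.update (1 : Fin m → S) i s i = s := by simp
    have h2 : Function.update (1 : Fin m → S) i s j = 1 := by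
      simp [Function.update_of_ne (Ne.symm hij)]
    have := hx
    simp only [hH, Subgroup.mem_mk, Submonoid.mem_mk, Subsemigroup.mem_mk, Set.mem_setOf_eq] at this
    rw [h1, h2] at this
    exact this
  exact hs this
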